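/- With the setup of the path-based optimality conditions: suppose for each k ∈ [K] (paths with x_k > 0 in a component C), ∑_{j ∈ P_k} 1/(∑_{i: j ∈ P_i} x_i) - λ D_k = μ holds with μ > 0, λ ≥ 0, and 0 ≤ D_k ≤ D_max. Then, letting H = ∑_k x_k and |C| the number of nodes covered by the paths, |C|/(μ + λ D_max) ≤ H ≤ |C|/μ. -/
import Mathlib


theorem component_mass_bounds
    {C : Type*} [Fintype C] [DecidableEq C]
    (K : ℕ) (hK : 0 < K) (P : Fin K → Finset C) (x : Fin K → ℝ)
    (hx : ∀ k, 0 < x k)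
    (hcover : ∀ j : C, ∃ k, j ∈ P k)
    (lam μ Dmax : ℝ) (hlam : 0 ≤ lam) (hμ : 0 < μ)
    (D : Fin K → ℝ) (hD : ∀ k, 0 ≤ D k ∧ D k ≤ Dmax)
    (hstat : ∀ k,
      (∑ j ∈ P k, 1 / (∑ i ∈ Finset.univ.filter (fun i => j ∈ P i), x i))
        - lam * D k = μ) :
    (Fintype.card C : ℝ) / (μ + lam * Dmax) ≤ ∑ k, x k ∧
    ∑ k, x k ≤ (Fintype.card C : ℝ) / μ := by
  set S : C → ℝ := fun j => ∑ i ∈ Finset.univ.filter (fun i => j ∈ P i), x i with hSdef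
  have hS : ∀ j : C, 0 < S j := by
    intro j
    obtain ⟨k, hk⟩ := hcover j
    exact Finset.sum_pos (fun i _ => hx i) ⟨k, by simp [hk]⟩
  have hDmax : 0 ≤ Dmax := by
    have k0 : Fin K := ⟨0, hK⟩
    exact le_trans (hD k0).1 (hD k0).2
  have hdc : ∑ k, ∑ j ∈ P k, x k / S j = (Fintype.card C : ℝ) := by
    have h1 : ∀ k : Fin K, ∑ j ∈ P k, x k / S j
        = ∑ j : C, if j ∈ P k then x k / S j else 0 := by
      intro k
      rw [Finset.sum_ite_mem, Finset.univ_inter]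
    simp_rw [h1]
    rw [Finset.sum_comm]
    have h2 : ∀ j : C, ∑ k : Fin K, (if j ∈ P k then x k / S j else 0) = 1 := by
      intro j
      have : ∑ k : Fin K, (if j ∈ P k then x k / S j else 0)
          = (∑ k ∈ Finset.univ.filter (fun k => j ∈ P k), x k) / S j := by
        rw [Finset.sum_div, Finset.sum_filter]
      rw [this]
      exact div_self (hS j).ne'
    simp_rw [h2]
    simp
  have key : μ * (∑ k, x k) + lam * ∑ k, x k * D k = (Fintype.card C : ℝ) := by
    have h3 : ∀ k : Fin K, x k * μ
        = (∑ j ∈ P k, x k / S j) - lam * (x k * D k) := by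
      intro k
      rw [← hstat k, mul_sub, Finset.mul_sum]
      have hone : ∀ j ∈ P k, x k * (1 / S j) = x k / S j := fun j _ => mul_one_div _ _
      rw [Finset.sum_congr rfl hone]
      ring
    have h4 : ∑ k, x k * μ = ∑ k, ((∑ j ∈ P k, x k / S j) - lam * (x k * D k)) :=
      Finset.sum_congr rfl fun k _ => h3 k
    rw [Finset.sum_sub_distrib, hdc, ← Finset.mul_sum, ← Finset.sum_mul, mul_comm] at h4
    linarith
  have hxD : 0 ≤ ∑ k, x k * D k :=
    Finset.sum_nonneg fun k _ => mul_nonneg (hx k).le (hD k).1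
  have hT : 0 < ∑ k, x k := Finset.sum_pos (fun k _ => hx k) ⟨⟨0, hK⟩, Finset.mem_univ _⟩
  constructor
  · rw [div_le_iff₀ (by positivity : (0:ℝ) < μ + lam * Dmax)]
    have hb : lam * ∑ k, x k * D k ≤ lam * Dmax * ∑ k, x k := by
      rw [Finset.mul_sum, Finset.mul_sum]
      apply Finset.sum_le_sum
      intro k _
      have h2 : x k * D k ≤ x k * Dmax := mul_le_mul_of_nonneg_left (hD k).2 (hx k).le
      calc lam * (x k * D k) ≤ lam * (x k * Dmax) := mul_le_mul_of_nonneg_left h2 hlam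
        _ = lam * Dmax * x k := by ring
    nlinarith [key, hb]
  · rw [le_div_iff₀ hμ]
    nlinarith [mul_nonneg hlam hxD]
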